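/- Fix $\lambda_0 < 0 < \lambda_1$ and $y > 0$. The equation $\frac{e^{\lambda_1 y}}{\lambda_1 - \lambda_0} = \int_0^\infty \frac{e^{\lambda_1 s}}{(e^{\lambda_1 s} - \theta)^2} e^{\lambda_0 s}\, ds$ has a unique solution $\theta^* \in (0,1)$. -/

import Mathlib

open Real MeasureTheory Set Filter Topology

namespace Stmt6Aux

noncomputable def F (lam0 lam1 theta s : ℝ) : ℝ :=
  Real.exp (lam1 * s) / (Real.exp (lam1 * s) - theta) ^ 2 * Real.exp (lam0 * s)

lemma den_lb {lam1 t theta s : ℝ} (hlam1 : 0 < lam1) (ht0 : 0 ≤ t) (hle : theta ≤ t)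
    (hs : 0 ≤ s) : (1 - t) * Real.exp (lam1 * s) ≤ Real.exp (lam1 * s) - theta := by
  have h1 : 1 ≤ Real.exp (lam1 * s) := Real.one_le_exp (by positivity)
  nlinarith

lemma den_pos {lam1 t theta s : ℝ} (hlam1 : 0 < lam1) (ht0 : 0 ≤ t) (ht1 : t < 1)
    (hle : theta ≤ t) (hs : 0 ≤ s) : 0 < Real.exp (lam1 * s) - theta := by
  have h1 : 1 ≤ Real.exp (lam1 * s) := Real.one_le_exp (by positivity)
  linarith

lemma F_nonneg (lam0 lam1 theta s : ℝ) : 0 ≤ F lam0 lam1 theta s := by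
  unfold F; positivity

lemma F_meas (lam0 lam1 theta : ℝ) : Measurable (F lam0 lam1 theta) := by
  unfold F; fun_prop

lemma F_bound {lam0 lam1 t theta : ℝ} (hlam1 : 0 < lam1) (ht0 : 0 ≤ t) (ht1 : t < 1)
    (hle : theta ≤ t) {s : ℝ} (hs : 0 ≤ s) :
    ‖F lam0 lam1 theta s‖ ≤ (1 - t)⁻¹ ^ 2 * Real.exp ((lam0 - lam1) * s) := by
  rw [Real.norm_of_nonneg (F_nonneg _ _ _ _)]
  have hd := den_pos hlam1 ht0 ht1 hle hs
  have hlb := den_lb hlam1 ht0 hle hs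
  have e1pos := Real.exp_pos (lam1 * s)
  have e0pos := Real.exp_pos (lam0 * s)
  have h1t : 0 < 1 - t := by linarith
  have hsq : (1 - t) ^ 2 * Real.exp (lam1 * s) ^ 2 ≤ (Real.exp (lam1 * s) - theta) ^ 2 := by
    have h := mul_self_le_mul_self (mul_nonneg h1t.le e1pos.le) hlb
    nlinarith [h]
  have hsq0 : 0 < (1 - t) ^ 2 * Real.exp (lam1 * s) ^ 2 := by positivity
  have key : Real.exp (lam1 * s) / (Real.exp (lam1 * s) - theta) ^ 2 ≤
      Real.exp (lam1 * s) / ((1 - t) ^ 2 * Real.exp (lam1 * s) ^ 2) :=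
    div_le_div_of_nonneg_left e1pos.le hsq0 hsq
  calc F lam0 lam1 theta s
      ≤ Real.exp (lam1 * s) / ((1 - t) ^ 2 * Real.exp (lam1 * s) ^ 2) * Real.exp (lam0 * s) := by
        exact mul_le_mul_of_nonneg_right key e0pos.le
    _ = (1 - t)⁻¹ ^ 2 * Real.exp ((lam0 - lam1) * s) := by
        rw [sub_mul, Real.exp_sub]
        field_simp

lemma bound_integrable {lam0 lam1 : ℝ} (hlam0 : lam0 < 0) (hlam1 : 0 < lam1) (C : ℝ) :
    IntegrableOn (fun s => C * Real.exp ((lam0 - lam1) * s)) (Ioi (0:ℝ)) := by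
  have h := (exp_neg_integrableOn_Ioi 0 (show (0:ℝ) < lam1 - lam0 by linarith)).const_mul C
  simpa [neg_sub, IntegrableOn] using h

lemma F_integrableOn {lam0 lam1 t theta : ℝ} (hlam0 : lam0 < 0) (hlam1 : 0 < lam1)
    (ht0 : 0 ≤ t) (ht1 : t < 1) (hle : theta ≤ t) :
    IntegrableOn (F lam0 lam1 theta) (Ioi (0:ℝ)) := by
  refine (bound_integrable hlam0 hlam1 ((1-t)⁻¹^2)).mono'
    ((F_meas _ _ _).aestronglyMeasurable) ?_
  filter_upwards [ae_restrict_mem measurableSet_Ioi] with s hs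
  exact F_bound hlam1 ht0 ht1 hle (le_of_lt hs)

lemma integral_exp_decay {b : ℝ} (hb : 0 < b) :
    ∫ s in Ioi (0:ℝ), Real.exp (-b * s) = 1 / b := by
  have h : ∀ x ∈ Ici (0:ℝ), HasDerivAt (fun s => -Real.exp (-b*s)/b) (Real.exp (-b*x)) x := by
    intro x _
    have h1 : HasDerivAt (fun s : ℝ => -b*s) (-b) x := by
      simpa using (hasDerivAt_id x).const_mul (-b)
    have h2 := (h1.exp).neg.div_const b
    refine h2.congr_deriv ?_
    have hb' := hb.ne'
    field_simp
  have htop : Tendsto (fun s => -Real.exp (-b*s)/b) atTop (𝓝 0) := by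
    have h1 : Tendsto (fun s : ℝ => b*s) atTop atTop :=
      Tendsto.const_mul_atTop hb tendsto_id
    have h2 := ((Real.tendsto_exp_neg_atTop_nhds_zero.comp h1).neg.div_const b)
    simpa [Function.comp] using h2
  have hint : IntegrableOn (fun s => Real.exp (-b * s)) (Ioi (0:ℝ)) :=
    exp_neg_integrableOn_Ioi 0 hb
  rw [integral_Ioi_of_hasDerivAt_of_tendsto' h hint htop]
  norm_num
  ring

lemma G_upper {lam0 lam1 theta : ℝ} (hlam0 : lam0 < 0) (hlam1 : 0 < lam1)
    (ht0 : 0 ≤ theta) (ht1 : theta < 1) :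
    ∫ s in Ioi (0:ℝ), F lam0 lam1 theta s ≤ (1 - theta)⁻¹ ^ 2 * (1 / (lam1 - lam0)) := by
  have hint := F_integrableOn hlam0 hlam1 ht0 ht1 (le_refl theta)
  have hb := bound_integrable hlam0 hlam1 ((1-theta)⁻¹^2)
  have hmono := setIntegral_mono_on hint hb measurableSet_Ioi
    (fun s hs => le_trans (le_abs_self _) (F_bound hlam1 ht0 ht1 (le_refl theta) (le_of_lt hs)))
  refine le_trans hmono ?_
  rw [MeasureTheory.integral_const_mul]
  have : ∀ s : ℝ, (lam0 - lam1) * s = -(lam1 - lam0) * s := fun s => by ring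
  simp_rw [this]
  rw [integral_exp_decay (show (0:ℝ) < lam1 - lam0 by linarith)]

lemma F_lt {lam0 lam1 θ1 θ2 s : ℝ} (hlam1 : 0 < lam1) (h0 : 0 ≤ θ1) (h12 : θ1 < θ2)
    (h2 : θ2 < 1) (hs : 0 ≤ s) : F lam0 lam1 θ1 s < F lam0 lam1 θ2 s := by
  have e1pos := Real.exp_pos (lam1*s)
  have e0pos := Real.exp_pos (lam0*s)
  have d2 : 0 < Real.exp (lam1*s) - θ2 := den_pos hlam1 (le_trans h0 h12.le) h2 (le_refl θ2) hs
  have hsq : (Real.exp (lam1*s) - θ2)^2 < (Real.exp (lam1*s) - θ1)^2 := by nlinarith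
  have hdiv : Real.exp (lam1*s)/(Real.exp (lam1*s) - θ1)^2
      < Real.exp (lam1*s)/(Real.exp (lam1*s) - θ2)^2 :=
    div_lt_div_of_pos_left e1pos (by positivity) hsq
  exact mul_lt_mul_of_pos_right hdiv e0pos

lemma G_strictMonoOn {lam0 lam1 : ℝ} (hlam0 : lam0 < 0) (hlam1 : 0 < lam1) :
    StrictMonoOn (fun θ => ∫ s in Ioi (0:ℝ), F lam0 lam1 θ s) (Ico (0:ℝ) 1) := by
  intro θ1 h1 θ2 h2 h12
  have hi1 : IntegrableOn (F lam0 lam1 θ1) (Ioi 0) :=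
    F_integrableOn hlam0 hlam1 h2.1 h2.2 h12.le
  have hi2 : IntegrableOn (F lam0 lam1 θ2) (Ioi 0) :=
    F_integrableOn hlam0 hlam1 h2.1 h2.2 (le_refl θ2)
  have key : 0 < ∫ s in Ioi (0:ℝ), (F lam0 lam1 θ2 - F lam0 lam1 θ1) s := by
    rw [setIntegral_pos_iff_support_of_nonneg_ae ?_ (hi2.sub hi1)]
    · refine lt_of_lt_of_le ?_ (measure_mono (fun s hs => ⟨?_, hs⟩))
      · simp [Real.volume_Ioi]
      · simp only [Function.mem_support, Pi.sub_apply]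
        exact sub_ne_zero.mpr (F_lt hlam1 h1.1 h12 h2.2 (le_of_lt hs)).ne'
    · filter_upwards [ae_restrict_mem measurableSet_Ioi] with s hs
      simpa [Pi.sub_apply] using
        sub_nonneg.mpr (F_lt hlam1 h1.1 h12 h2.2 (le_of_lt hs)).le
  simp only [Pi.sub_apply] at key
  rw [integral_sub hi2 hi1] at key
  simpa using sub_pos.mp key

lemma G_continuousAt {lam0 lam1 θ0 : ℝ} (hlam0 : lam0 < 0) (hlam1 : 0 < lam1)
    (h0 : 0 ≤ θ0) (h1 : θ0 < 1) :
    ContinuousAt (fun θ => ∫ s in Ioi (0:ℝ), F lam0 lam1 θ s) θ0 := by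
  set t := (1 + θ0)/2 with ht
  have ht0 : 0 ≤ t := by simp only [ht]; linarith
  have ht1 : t < 1 := by simp only [ht]; linarith
  have hθt : θ0 < t := by simp only [ht]; linarith
  refine continuousAt_of_dominated
    (bound := fun s => (1-t)⁻¹^2 * Real.exp ((lam0-lam1)*s)) ?_ ?_ ?_ ?_
  · exact Eventually.of_forall fun θ => (F_meas _ _ _).aestronglyMeasurable
  · filter_upwards [eventually_lt_nhds hθt] with θ hθ
    filter_upwards [ae_restrict_mem measurableSet_Ioi] with s hs
    exact F_bound hlam1 ht0 ht1 hθ.le (le_of_lt hs)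
  · exact bound_integrable hlam0 hlam1 _
  · filter_upwards [ae_restrict_mem measurableSet_Ioi] with s hs
    have dne : (Real.exp (lam1*s) - θ0)^2 ≠ 0 := by
      have := den_pos hlam1 h0 h1 (le_refl θ0) (le_of_lt hs)
      positivity
    unfold F
    exact ((continuousAt_const.div
      ((continuousAt_const.sub continuousAt_id).pow 2) dne).mul continuousAt_const)

lemma exp_sub_one_le {x : ℝ} (hx : 0 ≤ x) : Real.exp x - 1 ≤ x * Real.exp x := by
  have h := Real.add_one_le_exp (-x)
  rw [Real.exp_neg] at h
  have hp := Real.exp_pos x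
  nlinarith [mul_le_mul_of_nonneg_right h hp.le, inv_mul_cancel₀ hp.ne']

lemma G_lower {lam0 lam1 : ℝ} (hlam0 : lam0 < 0) (hlam1 : 0 < lam1) {ε : ℝ}
    (hε0 : 0 < ε) (hε1 : ε ≤ 1) :
    Real.exp lam0 / (lam1 * Real.exp lam1) * (1/ε - 1/(lam1 * Real.exp lam1 + ε))
      ≤ ∫ s in Ioi (0:ℝ), F lam0 lam1 (1-ε) s := by
  set a := lam1 * Real.exp lam1 with ha
  have hapos : 0 < a := by positivity
  set c := Real.exp lam0 with hc
  have hcpos : 0 < c := Real.exp_pos _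
  have hθ0 : 0 ≤ 1 - ε := by linarith
  have hθ1 : 1 - ε < 1 := by linarith
  -- pointwise bound
  have hpt : ∀ s ∈ Ioc (0:ℝ) 1, c * ((a*s + ε)⁻¹)^2 ≤ F lam0 lam1 (1-ε) s := by
    intro s hs
    have hs0 : 0 ≤ s := hs.1.le
    have hs1 : s ≤ 1 := hs.2
    have hd : 0 < Real.exp (lam1 * s) - (1 - ε) :=
      den_pos hlam1 hθ0 hθ1 (le_refl _) hs0
    have hle : Real.exp (lam1 * s) - (1 - ε) ≤ a * s + ε := by
      have h1 : Real.exp (lam1 * s) - 1 ≤ (lam1 * s) * Real.exp (lam1 * s) :=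
        exp_sub_one_le (by positivity)
      have h2 : Real.exp (lam1 * s) ≤ Real.exp lam1 :=
        Real.exp_le_exp.mpr (by nlinarith)
      have h3 : (lam1 * s) * Real.exp (lam1 * s) ≤ (lam1 * s) * Real.exp lam1 := by
        apply mul_le_mul_of_nonneg_left h2 (by positivity)
      have : (lam1 * s) * Real.exp lam1 = a * s := by rw [ha]; ring
      linarith
    have hεas : 0 < a * s + ε := by positivity
    have hinv : (a*s + ε)⁻¹ ≤ (Real.exp (lam1 * s) - (1 - ε))⁻¹ :=
      inv_anti₀ hd hle
    have hinvsq : ((a*s + ε)⁻¹)^2 ≤ ((Real.exp (lam1 * s) - (1 - ε))⁻¹)^2 :=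
      pow_le_pow_left₀ (by positivity) hinv 2
    have hnum : c ≤ Real.exp (lam1 * s) * Real.exp (lam0 * s) := by
      have hx : 1 ≤ Real.exp (lam1 * s) := Real.one_le_exp (by positivity)
      have hy : c ≤ Real.exp (lam0 * s) := by
        rw [hc]; apply Real.exp_le_exp.mpr; nlinarith
      nlinarith [Real.exp_pos (lam0 * s)]
    have : F lam0 lam1 (1-ε) s
        = (Real.exp (lam1 * s) * Real.exp (lam0 * s)) * ((Real.exp (lam1*s) - (1-ε))⁻¹)^2 := by
      unfold F
      rw [div_mul_eq_mul_div, div_eq_mul_inv, inv_pow]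
    rw [this]
    apply mul_le_mul hnum hinvsq (by positivity) (by positivity)
  -- integrability
  have hFint : IntegrableOn (F lam0 lam1 (1-ε)) (Ioi (0:ℝ)) :=
    F_integrableOn hlam0 hlam1 hθ0 hθ1 (le_refl _)
  have hgcont : ContinuousOn (fun s : ℝ => c * ((a*s + ε)⁻¹)^2) (Icc (0:ℝ) 1) := by
    apply ContinuousOn.mul continuousOn_const
    apply ContinuousOn.pow
    apply ContinuousOn.inv₀ (by fun_prop)
    intro s hs
    have : 0 < a * s + ε := by nlinarith [hs.1]
    exact this.ne'
  have hgint : IntegrableOn (fun s : ℝ => c * ((a*s + ε)⁻¹)^2) (Ioc (0:ℝ) 1) :=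
    (hgcont.integrableOn_compact isCompact_Icc).mono_set Ioc_subset_Icc_self
  -- chain
  have step1 : ∫ s in Ioc (0:ℝ) 1, F lam0 lam1 (1-ε) s ≤ ∫ s in Ioi (0:ℝ), F lam0 lam1 (1-ε) s := by
    apply setIntegral_mono_set hFint
    · filter_upwards with s using F_nonneg _ _ _ _
    · exact HasSubset.Subset.eventuallyLE Ioc_subset_Ioi_self
  have step2 : ∫ s in Ioc (0:ℝ) 1, (fun s : ℝ => c * ((a*s + ε)⁻¹)^2) s
      ≤ ∫ s in Ioc (0:ℝ) 1, F lam0 lam1 (1-ε) s :=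
    setIntegral_mono_on hgint (hFint.mono_set Ioc_subset_Ioi_self) measurableSet_Ioc hpt
  -- compute the explicit integral
  have hderiv : ∀ x ∈ uIcc (0:ℝ) 1,
      HasDerivAt (fun s => -(a*s+ε)⁻¹/a) (((a*x+ε)⁻¹)^2) x := by
    intro x hx
    rw [uIcc_of_le zero_le_one] at hx
    have hne : a*x + ε ≠ 0 := by nlinarith [hx.1]
    have h1 : HasDerivAt (fun s : ℝ => a*s + ε) a x := by
      simpa using ((hasDerivAt_id x).const_mul a).add_const ε
    have h2 := (h1.inv hne).neg.div_const a
    refine h2.congr_deriv ?_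
    have ha' := hapos.ne'
    field_simp
  have hii : IntervalIntegrable (fun x : ℝ => ((a*x+ε)⁻¹)^2) volume 0 1 := by
    apply ContinuousOn.intervalIntegrable
    rw [uIcc_of_le zero_le_one]
    apply ContinuousOn.pow
    apply ContinuousOn.inv₀ (by fun_prop)
    intro s hs
    have : 0 < a * s + ε := by nlinarith [hs.1]
    exact this.ne'
  have hcomp : ∫ x in (0:ℝ)..1, ((a*x+ε)⁻¹)^2 = 1/a * (1/ε - 1/(a + ε)) := by
    rw [intervalIntegral.integral_eq_sub_of_hasDerivAt hderiv hii]
    have hne1 : a + ε ≠ 0 := by positivity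
    have hne2 : ε ≠ 0 := hε0.ne'
    field_simp
    ring
  have step3 : ∫ s in Ioc (0:ℝ) 1, (fun s : ℝ => c * ((a*s + ε)⁻¹)^2) s
      = c/a * (1/ε - 1/(a + ε)) := by
    rw [← intervalIntegral.integral_of_le zero_le_one]
    rw [intervalIntegral.integral_const_mul, hcomp]
    ring
  calc c / a * (1/ε - 1/(a + ε))
      = ∫ s in Ioc (0:ℝ) 1, (fun s : ℝ => c * ((a*s + ε)⁻¹)^2) s := step3.symm
    _ ≤ ∫ s in Ioc (0:ℝ) 1, F lam0 lam1 (1-ε) s := step2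
    _ ≤ ∫ s in Ioi (0:ℝ), F lam0 lam1 (1-ε) s := step1

end Stmt6Aux

/-- The equation `e^{λ₁ y}/(λ₁-λ₀) = ∫₀^∞ e^{λ₁ s}/(e^{λ₁ s}-θ)² e^{λ₀ s} ds`
has a unique solution `θ* ∈ (0,1)`. -/
theorem stmt_6 (lam0 lam1 y : ℝ) (hlam0 : lam0 < 0) (hlam1 : 0 < lam1) (hy : 0 < y) :
    ∃! theta : ℝ, theta ∈ Set.Ioo (0:ℝ) 1 ∧
      Real.exp (lam1 * y) / (lam1 - lam0) =
        ∫ s in Set.Ioi (0:ℝ),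
          Real.exp (lam1 * s) / (Real.exp (lam1 * s) - theta) ^ 2 * Real.exp (lam0 * s) := by
  classical
  set G : ℝ → ℝ := fun θ => ∫ s in Ioi (0:ℝ), Stmt6Aux.F lam0 lam1 θ s with hGdef
  have hlam10 : 0 < lam1 - lam0 := by linarith
  set M : ℝ := Real.exp (lam1*y)/(lam1-lam0) with hM
  have hMpos : 0 < M := div_pos (Real.exp_pos _) hlam10
  -- choose θa with G θa < M
  set u : ℝ := Real.exp (-(lam1*y)/2) with hu
  have hu0 : 0 < u := Real.exp_pos _
  have hu1 : u < 1 := by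
    rw [hu, Real.exp_lt_one_iff]
    nlinarith [mul_pos hlam1 hy]
  set θa : ℝ := (1-u)/2 with hθadef
  have hθa0 : 0 < θa := by rw [hθadef]; linarith
  have hθa1 : θa < 1 := by rw [hθadef]; linarith
  have h1θa : 1 - θa = (1+u)/2 := by rw [hθadef]; ring
  have hGa : G θa < M := by
    refine lt_of_le_of_lt (Stmt6Aux.G_upper hlam0 hlam1 hθa0.le hθa1) ?_
    have husq : u^2 = Real.exp (-(lam1*y)) := by
      rw [hu, sq, ← Real.exp_add]; ring_nf
    have hexp : (u^2)⁻¹ = Real.exp (lam1*y) := by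
      rw [husq, Real.exp_neg, inv_inv]
    have hkey : (1-θa)⁻¹^2 < (u^2)⁻¹ := by
      rw [← inv_pow]
      refine pow_lt_pow_left₀ ?_ (inv_nonneg.mpr (by linarith)) (by norm_num)
      refine inv_strictAnti₀ hu0 ?_
      rw [h1θa]; linarith
    rw [hM]
    calc (1-θa)⁻¹^2 * (1/(lam1-lam0)) < (u^2)⁻¹ * (1/(lam1-lam0)) := by
          apply mul_lt_mul_of_pos_right hkey (by positivity)
      _ = Real.exp (lam1*y)/(lam1-lam0) := by rw [hexp]; ring
  -- choose θb with M < G θb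
  obtain ⟨θb, hθb, hGb⟩ : ∃ θb ∈ Ioo (0:ℝ) 1, M < G θb := by
    set a : ℝ := lam1 * Real.exp lam1 with ha
    have hapos : 0 < a := by positivity
    set c : ℝ := Real.exp lam0 with hc
    have hcpos : 0 < c := Real.exp_pos _
    set B : ℝ := c/a with hB
    have hBpos : 0 < B := by positivity
    set K : ℝ := M + B/a with hK
    have hKpos : 0 < K := by positivity
    set ε : ℝ := min (1/2) (B/(2*K)) with hε
    have hε0 : 0 < ε := lt_min (by norm_num) (by positivity)
    have hεhalf : ε ≤ 1/2 := min_le_left _ _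
    have hε1 : ε ≤ 1 := by linarith
    refine ⟨1 - ε, ⟨by linarith, by linarith⟩, ?_⟩
    have hlow := Stmt6Aux.G_lower hlam0 hlam1 hε0 hε1
    have hBineq : 2*K ≤ B/ε := by
      have h1 : ε ≤ B/(2*K) := min_le_right _ _
      have h2 : B/(B/(2*K)) ≤ B/ε := div_le_div_of_nonneg_left hBpos.le hε0 h1
      have h3 : B/(B/(2*K)) = 2*K := by
        field_simp
      linarith
    have hsmall : B * (1/(a + ε)) ≤ B * (1/a) := by
      apply mul_le_mul_of_nonneg_left _ hBpos.le
      apply div_le_div_of_nonneg_left one_pos.le hapos (by linarith)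
    have hexpand : B * (1/ε - 1/(a+ε)) = B/ε - B*(1/(a+ε)) := by ring
    have : M < B * (1/ε - 1/(a+ε)) := by
      rw [hexpand]
      have hba : B * (1/a) = B/a := by ring
      have hBa : 0 < B/a := by positivity
      rw [hK] at hBineq
      linarith
    calc M < B * (1/ε - 1/(a+ε)) := this
      _ = c/a * (1/ε - 1/(a+ε)) := by rw [hB]
      _ ≤ G (1-ε) := hlow
  have hmono := Stmt6Aux.G_strictMonoOn hlam0 hlam1 (lam0 := lam0)
  have hθaI : θa ∈ Ico (0:ℝ) 1 := ⟨hθa0.le, hθa1⟩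
  have hθbI : θb ∈ Ico (0:ℝ) 1 := ⟨hθb.1.le, hθb.2⟩
  have hab : θa < θb := by
    by_contra h
    push_neg at h
    have := hmono.monotoneOn hθbI hθaI h
    simp only [hGdef] at hGa hGb
    exact absurd (lt_of_lt_of_le (lt_trans hGa hGb) this) (lt_irrefl _)
  have hcont : ContinuousOn G (Icc θa θb) := fun θ hθ =>
    (Stmt6Aux.G_continuousAt hlam0 hlam1 (le_trans hθa0.le hθ.1)
      (lt_of_le_of_lt hθ.2 hθb.2)).continuousWithinAt
  obtain ⟨θs, hθsIcc, hGθs⟩ := intermediate_value_Icc hab.le hcont ⟨hGa.le, hGb.le⟩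
  have hθsIoo : θs ∈ Ioo (0:ℝ) 1 :=
    ⟨lt_of_lt_of_le hθa0 hθsIcc.1, lt_of_le_of_lt hθsIcc.2 hθb.2⟩
  refine ⟨θs, ⟨hθsIoo, ?_⟩, ?_⟩
  · have : G θs = M := hGθs
    simp only [hGdef, Stmt6Aux.F] at this
    rw [hM] at this
    exact this.symm
  · rintro θ' ⟨hθ'mem, hθ'eq⟩
    have hG' : G θ' = M := by
      simp only [hGdef, Stmt6Aux.F]
      rw [hM]
      exact hθ'eq.symm
    exact hmono.injOn ⟨hθ'mem.1.le, hθ'mem.2⟩ ⟨(lt_of_lt_of_le hθa0 hθsIcc.1).le, hθsIoo.2⟩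
      (hG'.trans hGθs.symm)
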